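/- Let n be an even positive integer and let X be a finite set of cardinality n with a transitive action of DihedralGroup n. Assume that some point of X is fixed by some reflection sr i. Then: (1) for every j : ZMod n with j ≡ i (mod 2), the reflection sr j fixes exactly two points of X; (2) for every j : ZMod n with j ≢ i (mod 2), the reflection sr j fixes no point of X; and (3) for every i : ZMod n with i ≠ 0, the rotation r i fixes no point of X. -/

import Mathlib

open DihedralGroup

/-- For `n` even and a transitive action of the dihedral group of order `2n` on
a set of cardinality `n`, if some point is fixed by some reflection `sr i`,
then: every reflection `sr j` with `j ≡ i (mod 2)` fixes exactly two points,
every reflection `sr j` with `j ≢ i (mod 2)` fixes no point, and every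
nontrivial rotation fixes no point. -/
theorem dihedral_even_transitive_action_fixed_points
    (n : ℕ) (hn : 0 < n) (heven : Even n)
    (X : Type*) [Finite X] [MulAction (DihedralGroup n) X]
    [MulAction.IsPretransitive (DihedralGroup n) X]
    (hX : Nat.card X = n)
    (i : ZMod n) (hi : ∃ x : X, sr i • x = x) :
    (∀ j : ZMod n,
      ZMod.castHom heven.two_dvd (ZMod 2) j = ZMod.castHom heven.two_dvd (ZMod 2) i →
      Nat.card {x : X // sr j • x = x} = 2) ∧
    (∀ j : ZMod n,
      ZMod.castHom heven.two_dvd (ZMod 2) j ≠ ZMod.castHom heven.two_dvd (ZMod 2) i →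
      ∀ x : X, sr j • x ≠ x) ∧
    (∀ k : ZMod n, k ≠ 0 → ∀ x : X, r k • x ≠ x) := by
  classical
  have hne : NeZero n := ⟨hn.ne'⟩
  have hn2le : 2 ≤ n := by
    obtain ⟨c, hc⟩ := heven; omega
  obtain ⟨x, hx⟩ := hi
  set S := MulAction.stabilizer (DihedralGroup n) x with hS
  have hsriS : sr i ∈ S := hx
  have hidx : S.index = n := by
    rw [hS, MulAction.index_stabilizer_of_transitive, hX]
  have hcardS : Nat.card S = 2 := by
    have h1 : S.index * Nat.card S = Nat.card (DihedralGroup n) := S.index_mul_card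
    rw [hidx, DihedralGroup.nat_card] at h1
    exact Nat.eq_of_mul_eq_mul_left hn (by linarith [h1] : n * Nat.card S = n * 2)
  have hsr_ne_one : ∀ a : ZMod n, sr a ≠ (1 : DihedralGroup n) := by
    intro a h
    rw [DihedralGroup.one_def] at h
    exact absurd h (fun h' => nomatch h')
  have hmem : ∀ g : DihedralGroup n, g ∈ S → g = 1 ∨ g = sr i := by
    intro g hg
    by_cases hg1 : g = 1
    · exact Or.inl hg1
    · right
      obtain ⟨y, hy, huniq⟩ := (Nat.card_eq_two_iff' (1 : S)).mp hcardS
      have ha : (⟨sr i, hsriS⟩ : S) ≠ 1 := fun h => hsr_ne_one i (congrArg Subtype.val h)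
      have hb : (⟨g, hg⟩ : S) ≠ 1 := fun h => hg1 (congrArg Subtype.val h)
      exact congrArg Subtype.val ((huniq _ hb).trans (huniq _ ha).symm)
  have hmem' : ∀ g : DihedralGroup n, g • x = x → g = 1 ∨ g = sr i := fun g hg =>
    hmem g hg
  -- rotations act simply transitively
  have hinjφ : Function.Injective (fun k : ZMod n => r k • x) := by
    intro k l hkl
    simp only at hkl
    have h0 : r (k - l) • x = x := by
      have h := congrArg (fun y => r (-l) • y) hkl
      simp only [← mul_smul, r_mul_r] at h
      rw [show -l + k = k - l by ring, show -l + l = (0 : ZMod n) by ring,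
        ← DihedralGroup.one_def, one_smul] at h
      exact h
    rcases hmem' _ h0 with h | h
    · rw [DihedralGroup.one_def] at h
      have : k - l = 0 := by injection h
      linear_combination this
    · exact absurd h (by simp)
  have hsurjφ : ∀ y : X, ∃ k : ZMod n, r k • x = y := by
    intro y
    obtain ⟨g, hg⟩ := MulAction.exists_smul_eq (DihedralGroup n) x y
    cases g with
    | r k => exact ⟨k, hg⟩
    | sr k =>
      refine ⟨i - k, ?_⟩
      rw [← sr_mul_sr k i, mul_smul, hx, hg]
  have hfix_sr : ∀ (j k : ZMod n), sr j • (r k • x) = r k • x ↔ j + 2 * k = i := by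
    intro j k
    constructor
    · intro h
      rw [← mul_smul, sr_mul_r] at h
      have h2 : sr (j + 2 * k) • x = x := by
        have h' := congrArg (fun y => r (-k) • y) h
        simp only [← mul_smul, r_mul_sr, r_mul_r] at h'
        rw [show j + k - -k = j + 2 * k by ring, show -k + k = (0 : ZMod n) by ring,
          ← DihedralGroup.one_def, one_smul] at h'
        exact h'
      rcases hmem' _ h2 with h' | h'
      · exact absurd h' (hsr_ne_one _)
      · injection h'
    · intro h
      rw [← mul_smul, sr_mul_r]
      have heq : sr (j + k) = r k * sr i := by rw [r_mul_sr]; congr 1; linear_combination h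
      rw [heq, mul_smul, hx]
  have hfix_r : ∀ (m k : ZMod n), r m • (r k • x) = r k • x → m = 0 := by
    intro m k h
    rw [← mul_smul, r_mul_r] at h
    have h2 : r m • x = x := by
      have h' := congrArg (fun y => r (-k) • y) h
      simp only [← mul_smul, r_mul_r] at h'
      rw [show -k + (m + k) = m by ring, show -k + k = (0 : ZMod n) by ring,
        ← DihedralGroup.one_def, one_smul] at h'
      exact h'
    rcases hmem' _ h2 with h' | h'
    · rw [DihedralGroup.one_def] at h'
      injection h'
    · exact absurd h' (by simp)
  -- arithmetic in ZMod n
  set d : ZMod n := ((n / 2 : ℕ) : ZMod n) with hd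
  have hn2 : 2 * (n / 2) = n := Nat.two_mul_div_two_of_even heven
  have hd2 : 2 * d = 0 := by
    have : (2 : ZMod n) * d = ((2 * (n / 2) : ℕ) : ZMod n) := by push_cast; ring
    rw [this, hn2, ZMod.natCast_self]
  have hd0 : d ≠ 0 := by
    rw [hd, Ne, ZMod.natCast_eq_zero_iff]
    intro hdvd
    have hpos : 0 < n / 2 := Nat.div_pos hn2le (by norm_num)
    have := Nat.le_of_dvd hpos hdvd
    omega
  have hker : ∀ e : ZMod n, 2 * e = 0 → e = 0 ∨ e = d := by
    intro e he
    have hvcast : ((e.val : ℕ) : ZMod n) = e := by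
      simp [ZMod.natCast_val, ZMod.cast_id]
    have hval : ((2 * e.val : ℕ) : ZMod n) = 0 := by
      push_cast
      rw [hvcast]
      exact_mod_cast he
    rw [ZMod.natCast_eq_zero_iff] at hval
    have hlt : e.val < n := ZMod.val_lt e
    obtain ⟨t, ht⟩ := hval
    have ht2 : t < 2 := by nlinarith
    have : t = 0 ∨ t = 1 := by omega
    rcases this with rfl | rfl
    · left
      have : e.val = 0 := by omega
      rw [← hvcast, this, Nat.cast_zero]
    · right
      have : e.val = n / 2 := by omega
      rw [← hvcast, this, hd]
  -- cast facts
  have hcast2 : ∀ k : ZMod n, ZMod.castHom heven.two_dvd (ZMod 2) (2 * k) = 0 := by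
    intro k
    rw [map_mul]
    have : ZMod.castHom heven.two_dvd (ZMod 2) 2 = 0 := by
      rw [map_ofNat]; decide
    rw [this, zero_mul]
  refine ⟨?_, ?_, ?_⟩
  · -- j ≡ i : exactly two fixed points
    intro j hj
    have hc0 : ZMod.castHom heven.two_dvd (ZMod 2) (i - j) = 0 := by
      rw [map_sub, hj, sub_self]
    -- i - j is even, find k₀ with 2 k₀ = i - j
    obtain ⟨k₀, hk₀⟩ : ∃ k₀ : ZMod n, 2 * k₀ = i - j := by
      set c : ZMod n := i - j with hcdef
      have hvcast : ((c.val : ℕ) : ZMod n) = c := by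
        simp [ZMod.natCast_val, ZMod.cast_id]
      have h2dvd : 2 ∣ c.val := by
        have : ((c.val : ℕ) : ZMod 2) = 0 := by
          have h := hc0
          rw [ZMod.castHom_apply, ZMod.cast_eq_val] at h
          exact_mod_cast h
        rwa [ZMod.natCast_eq_zero_iff] at this
      obtain ⟨t, ht⟩ := h2dvd
      exact ⟨(t : ZMod n), by rw [← Nat.cast_ofNat, ← Nat.cast_mul, ← ht, hvcast]⟩
    have hk₁ : j + 2 * k₀ = i := by linear_combination hk₀
    have hk₂ : j + 2 * (k₀ + d) = i := by linear_combination hk₀ + hd2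
    rw [Nat.card_eq_two_iff]
    refine ⟨⟨r k₀ • x, (hfix_sr j k₀).2 hk₁⟩, ⟨r (k₀ + d) • x, (hfix_sr j (k₀ + d)).2 hk₂⟩,
      ?_, ?_⟩
    · intro h
      have h' := hinjφ (congrArg Subtype.val h)
      exact hd0 (by linear_combination -h')
    · ext ⟨y, hy⟩
      simp only [Set.mem_insert_iff, Set.mem_singleton_iff, Set.mem_univ, iff_true,
        Subtype.mk.injEq]
      obtain ⟨k, rfl⟩ := hsurjφ y
      have hk : j + 2 * k = i := (hfix_sr j k).1 hy
      have hker' : 2 * (k - k₀) = 0 := by linear_combination hk - hk₁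
      rcases hker _ hker' with h | h
      · left
        have : k = k₀ := by linear_combination h
        rw [this]
      · right
        have : k = k₀ + d := by linear_combination h
        rw [this]
  · -- j ≢ i : no fixed points
    intro j hj y hy
    obtain ⟨k, rfl⟩ := hsurjφ y
    have hk : j + 2 * k = i := (hfix_sr j k).1 hy
    apply hj
    have := congrArg (ZMod.castHom heven.two_dvd (ZMod 2)) hk
    rw [map_add, hcast2, add_zero] at this
    exact this
  · intro k hk y hy
    obtain ⟨l, rfl⟩ := hsurjφ y
    exact hk (hfix_r k l hy)
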